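/- Let M ∈ ℕ, let c : Fin M → ℂ and φ : Fin M → ℝ, and define f(t) = Σ_m c_m · exp(−i·t·φ_m) for t ∈ ℝ. Then for every ε > 0 and every t₀ ∈ ℝ there exists t > t₀ with |f(t) − f(0)| < ε. Consequently, limsup_{t→∞} |f(t)| ≥ |Σ_m c_m|. -/

import Mathlib

set_option maxHeartbeats 1000000


open scoped BigOperators

/-- A finite exponential polynomial `f(t) = Σ_m c_m·exp(−i·t·φ_m)` is almost
periodic: for every `ε > 0` and every `t₀` there is `t > t₀` with `|f(t) − f(0)| < ε`.
Consequently `limsup_{t→∞} |f(t)| ≥ |Σ_m c_m|`. -/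
theorem stmt8 (M : ℕ) (c : Fin M → ℂ) (φ : Fin M → ℝ)
    (f : ℝ → ℂ) (hf : ∀ t : ℝ, f t = ∑ m, c m * Complex.exp (-(Complex.I * t * (φ m : ℂ)))) :
    (∀ ε : ℝ, 0 < ε → ∀ t₀ : ℝ, ∃ t : ℝ, t₀ < t ∧ ‖f t - f 0‖ < ε) ∧
    ‖∑ m, c m‖ ≤ Filter.limsup (fun t : ℝ => ‖f t‖) Filter.atTop := by
  have habs1 : ∀ (t : ℝ) (m : Fin M),
      ‖Complex.exp (-(Complex.I * t * (φ m : ℂ)))‖ = 1 := by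
    intro t m
    rw [Complex.norm_exp]
    simp [Complex.mul_re, Complex.mul_im]
  have key : ∀ ε : ℝ, 0 < ε → ∀ t₀ : ℝ, ∃ t : ℝ, t₀ < t ∧ ‖f t - f 0‖ < ε := by
    intro ε hε t₀
    set S := ∑ m, ‖c m‖ with hS
    have hS0 : 0 ≤ S := Finset.sum_nonneg fun m _ => norm_nonneg _
    set δ := ε / (S + 1) with hδ
    have hδ0 : 0 < δ := div_pos hε (by linarith)
    obtain ⟨N, hN⟩ := exists_nat_gt (max t₀ 0)
    have hN0 : (0 : ℝ) < N := lt_of_le_of_lt (le_max_right _ _) hN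
    have hNt0 : t₀ < N := lt_of_le_of_lt (le_max_left _ _) hN
    set Φ : ℕ → (Fin M → ℂ) :=
      fun k m => Complex.exp (-(Complex.I * ((k * N : ℝ) : ℂ) * (φ m : ℂ))) with hΦ
    have hmem : ∀ k, Φ k ∈ Metric.closedBall (0 : Fin M → ℂ) 1 := by
      intro k
      rw [Metric.mem_closedBall, dist_zero_right]
      rw [pi_norm_le_iff_of_nonneg zero_le_one]
      intro m
      simp only [hΦ]
      rw [habs1]
    obtain ⟨a, -, ψ, hψ, hconv⟩ :=
      (isCompact_closedBall (0 : Fin M → ℂ) 1).tendsto_subseq hmem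
    have hcauchy : CauchySeq (Φ ∘ ψ) := hconv.cauchySeq
    rw [Metric.cauchySeq_iff] at hcauchy
    obtain ⟨K, hK⟩ := hcauchy δ hδ0
    set k₁ := ψ K with hk₁
    set k₂ := ψ (K + 1) with hk₂
    have hklt : k₁ < k₂ := hψ (Nat.lt_succ_self K)
    have hdist : dist (Φ k₂) (Φ k₁) < δ := hK (K + 1) (Nat.le_succ K) K le_rfl
    set t : ℝ := ((k₂ - k₁ : ℕ) : ℝ) * N with ht
    have hk1le : 1 ≤ ((k₂ - k₁ : ℕ) : ℝ) := by
      have : 1 ≤ k₂ - k₁ := Nat.le_sub_of_add_le (by omega)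
      exact_mod_cast this
    have htlarge : t₀ < t := by
      have : (N : ℝ) ≤ t := by
        rw [ht]; nlinarith
      linarith
    refine ⟨t, htlarge, ?_⟩
    have hf0 : f 0 = ∑ m, c m := by
      rw [hf]; simp
    have hterm : ∀ m : Fin M,
        ‖Complex.exp (-(Complex.I * (t : ℂ) * (φ m : ℂ))) - 1‖ < δ := by
      intro m
      have hsplit : Φ k₂ m = Φ k₁ m * Complex.exp (-(Complex.I * (t : ℂ) * (φ m : ℂ))) := by
        simp only [hΦ]
        rw [← Complex.exp_add]
        congr 1
        have hcast : ((k₂ * N : ℝ) : ℂ) = ((k₁ * N : ℝ) : ℂ) + ((t : ℝ) : ℂ) := by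
          push_cast [ht]
          rw [Nat.cast_sub hklt.le]
          ring
        rw [hcast]
        ring
      have hfac : Φ k₂ m - Φ k₁ m
          = Φ k₁ m * (Complex.exp (-(Complex.I * (t : ℂ) * (φ m : ℂ))) - 1) := by
        rw [hsplit]; ring
      have h1 : ‖Φ k₂ m - Φ k₁ m‖
          = ‖Complex.exp (-(Complex.I * (t : ℂ) * (φ m : ℂ))) - 1‖ := by
        rw [hfac, norm_mul]
        have : ‖Φ k₁ m‖ = 1 := by simp only [hΦ]; exact habs1 _ _
        rw [this, one_mul]
      rw [← h1]
      calc ‖Φ k₂ m - Φ k₁ m‖ = dist (Φ k₂ m) (Φ k₁ m) := by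
            rw [Complex.dist_eq]
        _ ≤ dist (Φ k₂) (Φ k₁) := dist_le_pi_dist _ _ m
        _ < δ := hdist
    rw [hf, hf0]
    have hsum : (∑ m, c m * Complex.exp (-(Complex.I * (t : ℂ) * (φ m : ℂ)))) - ∑ m, c m
        = ∑ m, c m * (Complex.exp (-(Complex.I * (t : ℂ) * (φ m : ℂ))) - 1) := by
      rw [← Finset.sum_sub_distrib]
      congr 1; ext m; ring
    rw [hsum]
    calc ‖∑ m, c m * (Complex.exp (-(Complex.I * (t : ℂ) * (φ m : ℂ))) - 1)‖
        ≤ ∑ m, ‖c m * (Complex.exp (-(Complex.I * (t : ℂ) * (φ m : ℂ))) - 1)‖ :=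
          norm_sum_le _ _
      _ ≤ ∑ m, ‖c m‖ * δ := by
          refine Finset.sum_le_sum fun m _ => ?_
          rw [norm_mul]
          exact mul_le_mul_of_nonneg_left (hterm m).le (norm_nonneg _)
      _ = S * δ := by rw [← Finset.sum_mul]
      _ < (S + 1) * δ := by nlinarith
      _ = ε := by
          rw [hδ]; field_simp
  refine ⟨key, ?_⟩
  have hf0 : f 0 = ∑ m, c m := by rw [hf]; simp
  have hbdd : Filter.IsBoundedUnder (· ≤ ·) Filter.atTop (fun t => ‖f t‖) := by
    refine Filter.isBoundedUnder_of ⟨∑ m, ‖c m‖, fun t => ?_⟩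
    rw [hf]
    calc ‖∑ m, c m * Complex.exp (-(Complex.I * t * (φ m : ℂ)))‖
        ≤ ∑ m, ‖c m * Complex.exp (-(Complex.I * t * (φ m : ℂ)))‖ :=
          norm_sum_le _ _
      _ = ∑ m, ‖c m‖ := by
          refine Finset.sum_congr rfl fun m _ => ?_
          rw [norm_mul, habs1, mul_one]
  rw [← hf0]
  refine le_of_forall_pos_le_add fun ε hε => ?_
  have hfreq : ∃ᶠ t in Filter.atTop, ‖f 0‖ - ε ≤ ‖f t‖ := by
    rw [Filter.frequently_atTop]
    intro t₀
    obtain ⟨t, ht, habst⟩ := key ε hε t₀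
    refine ⟨t, ht.le, ?_⟩
    have h1 : ‖f 0‖ - ‖f t‖ ≤ ‖f 0 - f t‖ :=
      norm_sub_norm_le _ _
    have h2 : ‖f 0 - f t‖ = ‖f t - f 0‖ := by
      rw [← norm_neg]; congr 1; ring
    linarith
  have := Filter.le_limsup_of_frequently_le hfreq hbdd
  linarith
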